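/- (Finsler–Thorpe trick, positive version; Proposition 2.2 of the paper in coordinates.) Let r : Fin 4 → Fin 4 → Fin 4 → Fin 4 → ℝ be an algebraic curvature tensor in coordinates: r i j k l = −r j i k l = −r i j l k, r i j k l = r k l i j, and r i j k l + r j k i l + r k i j l = 0. For an antisymmetric ω : Fin 4 → Fin 4 → ℝ set Q(ω) := (1/4)·Σ_{i,j,k,l} r i j k l · ω i j · ω l k and P(ω) := ω 0 1 · ω 2 3 − ω 0 2 · ω 1 3 + ω 0 3 · ω 1 2. Then the following are equivalent: (i) Σ_{i,j,k,l} r i j k l · x i · y j · y k · x l > 0 for all linearly independent x, y : Fin 4 → ℝ (i.e., sec > 0); (ii) there exists τ ∈ ℝ such that Q(ω) + τ·P(ω) > 0 for every antisymmetric ω : Fin 4 → Fin 4 → ℝ with ω ≠ 0. -/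

import Mathlib

open Finset Filter Topology

section FinslerThorpeAux

/-- antisymmetric 4×4 matrix from six entries -/
private def wmat (a b c d e f : ℝ) : Fin 4 → Fin 4 → ℝ := fun i j =>
  !![(0:ℝ), a, b, c;
     -a, 0, d, e;
     -b, -d, 0, f;
     -c, -e, -f, 0] i j

private def Wv (v : Fin 6 → ℝ) : Fin 4 → Fin 4 → ℝ :=
  wmat (v 0) (v 1) (v 2) (v 3) (v 4) (v 5)

private lemma Wv_lin (c s : ℝ) (u w : Fin 6 → ℝ) :
    ∀ i j, Wv (c • u + s • w) i j = c * Wv u i j + s * Wv w i j := by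
  intro i j
  fin_cases i <;> fin_cases j <;>
    simp [Wv, wmat, Pi.add_apply, Pi.smul_apply, smul_eq_mul] <;> ring

private lemma Wv_cont : ∀ i j, Continuous fun v : Fin 6 → ℝ => Wv v i j := by
  intro i j
  fin_cases i <;> fin_cases j <;> simp [Wv, wmat] <;> fun_prop

private lemma Wv_zero : ∀ i j, Wv 0 i j = 0 := by
  intro i j
  fin_cases i <;> fin_cases j <;>
    simp [Wv, wmat, Matrix.vecHead, Matrix.vecTail]

/-- swap the last two summation indices -/
private lemma swap_kl (r : Fin 4 → Fin 4 → Fin 4 → Fin 4 → ℝ)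
    (hr2 : ∀ i j k l, r i j k l = -r i j l k) (x y : Fin 4 → ℝ)
    (c : Fin 4 → Fin 4 → ℝ) :
    (∑ i, ∑ j, ∑ k, ∑ l, r i j k l * c i j * (x k * y l))
      = -(∑ i, ∑ j, ∑ k, ∑ l, r i j k l * c i j * (x l * y k)) := by
  simp only [← Finset.sum_neg_distrib]
  refine Finset.sum_congr rfl fun i _ => Finset.sum_congr rfl fun j _ => ?_
  rw [Finset.sum_comm]
  refine Finset.sum_congr rfl fun k _ => Finset.sum_congr rfl fun l _ => ?_
  linear_combination (c i j * (x l * y k)) * hr2 i j l k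

/-- swap the first two summation indices -/
private lemma swap_ij (r : Fin 4 → Fin 4 → Fin 4 → Fin 4 → ℝ)
    (hr1 : ∀ i j k l, r i j k l = -r j i k l) (x y : Fin 4 → ℝ)
    (c : Fin 4 → Fin 4 → ℝ) :
    (∑ i, ∑ j, ∑ k, ∑ l, r i j k l * (x i * y j) * c k l)
      = -(∑ i, ∑ j, ∑ k, ∑ l, r i j k l * (x j * y i) * c k l) := by
  simp only [← Finset.sum_neg_distrib]
  rw [Finset.sum_comm]
  refine Finset.sum_congr rfl fun i _ => Finset.sum_congr rfl fun j _ => ?_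
  refine Finset.sum_congr rfl fun k _ => Finset.sum_congr rfl fun l _ => ?_
  linear_combination (x j * y i * c k l) * hr1 j i k l

/-- the curvature quadratic form on a decomposable 2-vector is 4 times the
sectional curvature numerator -/
private lemma wedge_sum (r : Fin 4 → Fin 4 → Fin 4 → Fin 4 → ℝ)
    (hr1 : ∀ i j k l, r i j k l = -r j i k l)
    (hr2 : ∀ i j k l, r i j k l = -r i j l k) (x y : Fin 4 → ℝ) :
    (∑ i, ∑ j, ∑ k, ∑ l, r i j k l * (x i * y j - x j * y i) * (x l * y k - x k * y l))
      = 4 * ∑ i, ∑ j, ∑ k, ∑ l, r i j k l * x i * y j * y k * x l := by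
  have split :
      (∑ i, ∑ j, ∑ k, ∑ l, r i j k l * (x i * y j - x j * y i) * (x l * y k - x k * y l))
        = (∑ i, ∑ j, ∑ k, ∑ l, r i j k l * (x i * y j) * (x l * y k))
          - (∑ i, ∑ j, ∑ k, ∑ l, r i j k l * (x i * y j) * (x k * y l))
          - (∑ i, ∑ j, ∑ k, ∑ l, r i j k l * (x j * y i) * (x l * y k))
          + (∑ i, ∑ j, ∑ k, ∑ l, r i j k l * (x j * y i) * (x k * y l)) := by
    simp only [← Finset.sum_add_distrib, ← Finset.sum_sub_distrib]
    refine Finset.sum_congr rfl fun i _ => Finset.sum_congr rfl fun j _ =>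
      Finset.sum_congr rfl fun k _ => Finset.sum_congr rfl fun l _ => ?_
    ring
  have h2 : (∑ i, ∑ j, ∑ k, ∑ l, r i j k l * (x i * y j) * (x k * y l))
      = -(∑ i, ∑ j, ∑ k, ∑ l, r i j k l * (x i * y j) * (x l * y k)) := by
    have := swap_kl r hr2 x y (fun i j => x i * y j)
    simpa using this
  have h3 : (∑ i, ∑ j, ∑ k, ∑ l, r i j k l * (x j * y i) * (x l * y k))
      = -(∑ i, ∑ j, ∑ k, ∑ l, r i j k l * (x i * y j) * (x l * y k)) := by
    have := swap_ij r hr1 y x (fun k l => x l * y k)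
    have h' : (∑ i, ∑ j, ∑ k, ∑ l, r i j k l * (y i * x j) * (x l * y k))
        = -(∑ i, ∑ j, ∑ k, ∑ l, r i j k l * (y j * x i) * (x l * y k)) := by
      simpa using this
    calc (∑ i, ∑ j, ∑ k, ∑ l, r i j k l * (x j * y i) * (x l * y k))
        = (∑ i, ∑ j, ∑ k, ∑ l, r i j k l * (y i * x j) * (x l * y k)) := by
          refine Finset.sum_congr rfl fun i _ => Finset.sum_congr rfl fun j _ =>
            Finset.sum_congr rfl fun k _ => Finset.sum_congr rfl fun l _ => ?_
          ring
      _ = -(∑ i, ∑ j, ∑ k, ∑ l, r i j k l * (y j * x i) * (x l * y k)) := h'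
      _ = -(∑ i, ∑ j, ∑ k, ∑ l, r i j k l * (x i * y j) * (x l * y k)) := by
          congr 1
          refine Finset.sum_congr rfl fun i _ => Finset.sum_congr rfl fun j _ =>
            Finset.sum_congr rfl fun k _ => Finset.sum_congr rfl fun l _ => ?_
          ring
  have h4 : (∑ i, ∑ j, ∑ k, ∑ l, r i j k l * (x j * y i) * (x k * y l))
      = (∑ i, ∑ j, ∑ k, ∑ l, r i j k l * (x i * y j) * (x l * y k)) := by
    have h := swap_kl r hr2 x y (fun i j => x j * y i)
    rw [h, h3, neg_neg]
  rw [split, h2, h3, h4]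
  have final : (∑ i, ∑ j, ∑ k, ∑ l, r i j k l * (x i * y j) * (x l * y k))
      = ∑ i, ∑ j, ∑ k, ∑ l, r i j k l * x i * y j * y k * x l := by
    refine Finset.sum_congr rfl fun i _ => Finset.sum_congr rfl fun j _ =>
      Finset.sum_congr rfl fun k _ => Finset.sum_congr rfl fun l _ => ?_
    ring
  rw [final]
  ring

/-- Finsler's lemma (Calabi's connectedness proof) for a pair of quadratic
forms on ℝⁿ, one of which is positive on the null set of the other. -/
private lemma finsler_abstract {n : ℕ}
    (Q P : (Fin n → ℝ) → ℝ) (BQ BP : (Fin n → ℝ) → (Fin n → ℝ) → ℝ)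
    (hQc : Continuous Q) (hPc : Continuous P)
    (hQ : ∀ (c s : ℝ) (u w : Fin n → ℝ),
      Q (c • u + s • w) = c ^ 2 * Q u + s ^ 2 * Q w + (c * s) * BQ u w)
    (hP : ∀ (c s : ℝ) (u w : Fin n → ℝ),
      P (c • u + s • w) = c ^ 2 * P u + s ^ 2 * P w + (c * s) * BP u w)
    (pos : ∀ v, v ≠ 0 → P v = 0 → 0 < Q v) :
    ∃ τ : ℝ, ∀ v, v ≠ 0 → 0 < Q v + τ * P v := by
  have hQ2 : ∀ (c : ℝ) (v : Fin n → ℝ), Q (c • v) = c ^ 2 * Q v := by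
    intro c v; have h := hQ c 0 v v; simpa using h
  have hP2 : ∀ (c : ℝ) (v : Fin n → ℝ), P (c • v) = c ^ 2 * P v := by
    intro c v; have h := hP c 0 v v; simpa using h
  -- the mixed-sign contradiction via a path on the sphere
  have mixed : ∀ (τ : ℝ) (u w : Fin n → ℝ), ‖u‖ = 1 → ‖w‖ = 1 →
      Q u + τ * P u ≤ 0 → Q w + τ * P w ≤ 0 → 0 < P u → P w < 0 → False := by
    intro τ u w hu hw hFu hFw hPu hPw
    set ε : ℝ := if BQ u w + τ * BP u w ≤ 0 then 1 else -1 with hεdef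
    have hε1 : ε ^ 2 = 1 := by rw [hεdef]; split <;> norm_num
    have hε2 : ε * (BQ u w + τ * BP u w) ≤ 0 := by
      rw [hεdef]; split
      · simpa
      · push_neg at *; nlinarith
    set γ : ℝ → (Fin n → ℝ) := fun t => Real.cos t • u + (ε * Real.sin t) • w with hγ
    have hγc : Continuous γ := by
      apply Continuous.add
      · exact Real.continuous_cos.smul continuous_const
      · exact (continuous_const.mul Real.continuous_sin).smul continuous_const
    have hf0 : P (γ 0) = P u := by rw [hγ]; simp only []; rw [hP]; simp
    have hfpi : P (γ (Real.pi / 2)) = P w := by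
      rw [hγ]; simp only []
      rw [hP]; simp [Real.cos_pi_div_two, Real.sin_pi_div_two, hε1]
    have hivt : ∃ t ∈ Set.Icc 0 (Real.pi / 2), P (γ t) = 0 := by
      have hmem : (0:ℝ) ∈ Set.Icc (P (γ (Real.pi / 2))) (P (γ 0)) := by
        rw [hf0, hfpi]; exact ⟨le_of_lt hPw, le_of_lt hPu⟩
      have hsub := intermediate_value_Icc' (by positivity : (0:ℝ) ≤ Real.pi / 2)
        ((hPc.comp hγc).continuousOn)
      obtain ⟨t, ht, hPt⟩ := hsub hmem
      exact ⟨t, ht, hPt⟩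
    obtain ⟨t, ht, hPt⟩ := hivt
    have hcos : 0 ≤ Real.cos t := Real.cos_nonneg_of_mem_Icc
      ⟨le_trans (by linarith [Real.pi_pos]) ht.1, ht.2⟩
    have hsin : 0 ≤ Real.sin t := Real.sin_nonneg_of_nonneg_of_le_pi ht.1
      (le_trans ht.2 (by linarith [Real.pi_pos]))
    have hFt : Q (γ t) + τ * P (γ t) ≤ 0 := by
      rw [hγ]; simp only []
      rw [hQ, hP]
      have h2 : (ε * Real.sin t) ^ 2 = Real.sin t ^ 2 := by
        rw [mul_pow, hε1, one_mul]
      have h3 : Real.cos t * (ε * Real.sin t) * (BQ u w + τ * BP u w) ≤ 0 := by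
        have heq : Real.cos t * (ε * Real.sin t) * (BQ u w + τ * BP u w)
            = (Real.cos t * Real.sin t) * (ε * (BQ u w + τ * BP u w)) := by ring
        rw [heq]
        exact mul_nonpos_of_nonneg_of_nonpos (by positivity) hε2
      rw [h2]
      nlinarith [sq_nonneg (Real.sin t), sq_nonneg (Real.cos t)]
    have hγne : γ t ≠ 0 := by
      intro h0
      rw [hγ] at h0; simp only [] at h0
      by_cases hc : Real.cos t = 0
      · have hs : Real.sin t ^ 2 = 1 := by
          have := Real.sin_sq_add_cos_sq t; rw [hc] at this; nlinarith
        have hz : (ε * Real.sin t) • w = 0 := by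
          rw [hc, zero_smul, zero_add] at h0; exact h0
        rcases smul_eq_zero.mp hz with h | h
        · have h4 : (ε * Real.sin t) ^ 2 = 1 := by rw [mul_pow, hε1, one_mul, hs]
          rw [h] at h4; norm_num at h4
        · rw [h] at hw; simp at hw
      · have hu' : u = (-(ε * Real.sin t) / Real.cos t) • w := by
          have h1 : Real.cos t • u = -((ε * Real.sin t) • w) := by
            rw [← neg_smul] at *
            linear_combination (norm := module) h0
          have h2 : u = (Real.cos t)⁻¹ • (Real.cos t • u) := (inv_smul_smul₀ hc u).symm
          rw [h1, ← neg_smul, smul_smul] at h2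
          rw [h2]; ring_nf
        have hPeq : P u = (-(ε * Real.sin t) / Real.cos t) ^ 2 * P w := by
          rw [hu', hP2]
        nlinarith [sq_nonneg (-(ε * Real.sin t) / Real.cos t)]
    have hQt : 0 < Q (γ t) := pos _ hγne hPt
    rw [hPt] at hFt
    linarith
  by_contra hcon
  push_neg at hcon
  have key : ∀ τ : ℝ, ∃ v : Fin n → ℝ, ‖v‖ = 1 ∧ Q v + τ * P v ≤ 0 := by
    intro τ
    obtain ⟨v, hv0, hvle⟩ := hcon τ
    have hnv : ‖v‖ ≠ 0 := fun h => hv0 (norm_eq_zero.mp h)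
    refine ⟨‖v‖⁻¹ • v, ?_, ?_⟩
    · rw [norm_smul]; simp [abs_of_nonneg (inv_nonneg.mpr (norm_nonneg v)),
        inv_mul_cancel₀ hnv]
    · rw [hQ2, hP2]
      have h2 : (0:ℝ) ≤ (‖v‖⁻¹) ^ 2 := sq_nonneg _
      nlinarith
  have hne : ∀ (τ : ℝ) (v : Fin n → ℝ), ‖v‖ = 1 → Q v + τ * P v ≤ 0 → P v ≠ 0 := by
    intro τ v hv hle hP0
    have hv0 : v ≠ 0 := by intro h; rw [h] at hv; simp at hv
    have := pos v hv0 hP0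
    rw [hP0] at hle; linarith
  -- subsequence extraction
  have extract : ∀ v : ℕ → (Fin n → ℝ), (∀ k, ‖v k‖ = 1) →
      ∃ (x : Fin n → ℝ) (φ : ℕ → ℕ), ‖x‖ = 1 ∧ StrictMono φ ∧
        Tendsto (fun k => Q (v (φ k))) atTop (𝓝 (Q x)) ∧
        Tendsto (fun k => P (v (φ k))) atTop (𝓝 (P x)) := by
    intro v hv
    have hmem : ∀ k, v k ∈ Metric.sphere (0 : Fin n → ℝ) 1 := by
      intro k; rw [mem_sphere_zero_iff_norm]; exact hv k
    obtain ⟨x, hx, φ, hφ, htend⟩ :=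
      (isCompact_sphere (0 : Fin n → ℝ) 1).tendsto_subseq hmem
    exact ⟨x, φ, mem_sphere_zero_iff_norm.mp hx, hφ,
      (hQc.tendsto x).comp htend, (hPc.tendsto x).comp htend⟩
  -- bound for -Q on the sphere
  obtain ⟨v1, hv1, _⟩ := key 0
  obtain ⟨vM, hvM, hM⟩ := (isCompact_sphere (0 : Fin n → ℝ) 1).exists_isMaxOn
    ⟨v1, mem_sphere_zero_iff_norm.mpr hv1⟩ (hQc.neg.continuousOn)
  set M : ℝ := -Q vM with hMdef
  have hMb : ∀ v : Fin n → ℝ, ‖v‖ = 1 → -Q v ≤ M :=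
    fun v hv => hM (mem_sphere_zero_iff_norm.mpr hv)
  -- the "all negative" predicate
  set allneg : ℝ → Prop :=
    fun τ => ∀ v : Fin n → ℝ, ‖v‖ = 1 → Q v + τ * P v ≤ 0 → P v < 0 with hallneg
  have dich : ∀ τ : ℝ, ¬ allneg τ →
      ∀ v : Fin n → ℝ, ‖v‖ = 1 → Q v + τ * P v ≤ 0 → 0 < P v := by
    intro τ hna v hv hle
    simp only [hallneg] at hna; push_neg at hna
    obtain ⟨u, hu, hule, hPu⟩ := hna
    have hPu' : 0 < P u := lt_of_le_of_ne hPu (Ne.symm (hne τ u hu hule))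
    rcases lt_trichotomy (P v) 0 with h | h | h
    · exact absurd (mixed τ u v hu hv hule hle hPu' h) (fun f => f)
    · exact absurd h (hne τ v hv hle)
    · exact h
  -- S = set of all-negative τ's is upward closed
  have up : ∀ τ1 τ2 : ℝ, allneg τ1 → τ1 ≤ τ2 → allneg τ2 := by
    intro τ1 τ2 h1 h12 v hv hle
    by_contra hn
    push_neg at hn
    have hPv : 0 < P v := lt_of_le_of_ne hn (Ne.symm (hne τ2 v hv hle))
    have hle1 : Q v + τ1 * P v ≤ 0 := by nlinarith
    exact absurd (h1 v hv hle1) (by linarith)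
  -- S is nonempty
  have Sne : ∃ τ : ℝ, allneg τ := by
    by_contra hS
    push_neg at hS
    have hv : ∀ k : ℕ, ∃ v : Fin n → ℝ, ‖v‖ = 1 ∧ Q v + (k:ℝ) * P v ≤ 0 ∧ 0 < P v := by
      intro k
      obtain ⟨v, hv, hle⟩ := key (k : ℝ)
      exact ⟨v, hv, hle, dich (k:ℝ) (hS k) v hv hle⟩
    choose v hv1 hv2 hv3 using hv
    obtain ⟨x, φ, hx, hφ, hQt, hPt⟩ := extract v hv1
    have hQx : Q x ≤ 0 := le_of_tendsto hQt (Eventually.of_forall fun k => by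
      have := hv2 (φ k); have := hv3 (φ k); nlinarith)
    have hPx0 : 0 ≤ P x := ge_of_tendsto hPt (Eventually.of_forall fun k =>
      le_of_lt (hv3 (φ k)))
    have hPx1 : P x ≤ 0 := by
      have htend0 : Tendsto (fun k : ℕ => M / (φ k : ℝ)) atTop (𝓝 0) :=
        (tendsto_const_div_atTop_nhds_zero_nat M).comp hφ.tendsto_atTop
      refine le_of_tendsto_of_tendsto hPt htend0 ?_
      rw [EventuallyLE, eventually_atTop]
      refine ⟨1, fun k hk => ?_⟩
      have hφk : (1:ℝ) ≤ (φ k : ℝ) := by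
        exact_mod_cast le_trans hk (hφ.le_apply)
      have h1 := hv2 (φ k)
      have h2 := hMb (v (φ k)) (hv1 (φ k))
      rw [le_div_iff₀ (by linarith : (0:ℝ) < (φ k : ℝ))]
      nlinarith
    have hPx : P x = 0 := le_antisymm hPx1 hPx0
    have hx0 : x ≠ 0 := by intro h; rw [h] at hx; simp at hx
    have := pos x hx0 hPx
    linarith
  -- mirror: some τ is NOT all-negative
  have Spos : ∃ τ : ℝ, ¬ allneg τ := by
    by_contra hS
    push_neg at hS
    have hv : ∀ k : ℕ, ∃ v : Fin n → ℝ, ‖v‖ = 1 ∧ Q v + (-(k:ℝ)) * P v ≤ 0 ∧ P v < 0 := by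
      intro k
      obtain ⟨v, hv, hle⟩ := key (-(k : ℝ))
      exact ⟨v, hv, hle, hS _ v hv hle⟩
    choose v hv1 hv2 hv3 using hv
    obtain ⟨x, φ, hx, hφ, hQt, hPt⟩ := extract v hv1
    have hQx : Q x ≤ 0 := le_of_tendsto hQt (Eventually.of_forall fun k => by
      have h1 := hv2 (φ k); have h2 := hv3 (φ k)
      have h3 : (0:ℝ) ≤ (φ k : ℝ) := Nat.cast_nonneg _
      nlinarith)
    have hPx0 : P x ≤ 0 := le_of_tendsto hPt (Eventually.of_forall fun k =>
      le_of_lt (hv3 (φ k)))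
    have hPx1 : 0 ≤ P x := by
      have htend0 : Tendsto (fun k : ℕ => -M / (φ k : ℝ)) atTop (𝓝 0) :=
        (tendsto_const_div_atTop_nhds_zero_nat (-M)).comp hφ.tendsto_atTop
      refine le_of_tendsto_of_tendsto htend0 hPt ?_
      rw [EventuallyLE, eventually_atTop]
      refine ⟨1, fun k hk => ?_⟩
      have hφk : (1:ℝ) ≤ (φ k : ℝ) := by
        exact_mod_cast le_trans hk (hφ.le_apply)
      have h1 := hv2 (φ k)
      have h2 := hMb (v (φ k)) (hv1 (φ k))
      rw [div_le_iff₀ (by linarith : (0:ℝ) < (φ k : ℝ))]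
      nlinarith
    have hPx : P x = 0 := le_antisymm hPx0 hPx1
    have hx0 : x ≠ 0 := by intro h; rw [h] at hx; simp at hx
    have := pos x hx0 hPx
    linarith
  obtain ⟨τlo, hτlo⟩ := Spos
  have hbdd : BddBelow {τ : ℝ | allneg τ} := by
    refine ⟨τlo, fun τ hτ => ?_⟩
    by_contra hle
    push_neg at hle
    exact hτlo (up τ τlo hτ (le_of_lt hle))
  set τ0 : ℝ := sInf {τ : ℝ | allneg τ} with hτ0
  have hgt : ∀ τ : ℝ, τ0 < τ → allneg τ := by
    intro τ hτ
    by_contra hna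
    have : τ ≤ τ0 := by
      rw [hτ0]
      refine le_csInf Sne fun s hs => ?_
      by_contra hc
      push_neg at hc
      exact hna (up s τ hs (le_of_lt hc))
    linarith
  have hlt : ∀ τ : ℝ, τ < τ0 → ¬ allneg τ := by
    intro τ hτ hal
    have : τ0 ≤ τ := csInf_le hbdd hal
    linarith
  -- tendsto of the perturbed parameters
  have hseq : Tendsto (fun k : ℕ => (1:ℝ) / (k + 1)) atTop (𝓝 0) :=
    tendsto_one_div_add_atTop_nhds_zero_nat
  have hτplus : Tendsto (fun k : ℕ => τ0 + 1 / (k + 1)) atTop (𝓝 τ0) := by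
    have := (tendsto_const_nhds (x := τ0) (f := (atTop : Filter ℕ))).add hseq
    simpa using this
  have hτminus : Tendsto (fun k : ℕ => τ0 - 1 / (k + 1)) atTop (𝓝 τ0) := by
    have := (tendsto_const_nhds (x := τ0) (f := (atTop : Filter ℕ))).sub hseq
    simpa using this
  -- negative-sign point in K τ0
  have hneg : ∃ x : Fin n → ℝ, ‖x‖ = 1 ∧ Q x + τ0 * P x ≤ 0 ∧ P x < 0 := by
    have hv : ∀ k : ℕ, ∃ v : Fin n → ℝ, ‖v‖ = 1 ∧
        Q v + (τ0 + 1 / (k + 1)) * P v ≤ 0 ∧ P v < 0 := by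
      intro k
      obtain ⟨v, hv, hle⟩ := key (τ0 + 1 / (k + 1))
      have hpos : τ0 < τ0 + 1 / (k + 1) := by
        have : (0:ℝ) < 1 / ((k:ℝ) + 1) := by positivity
        linarith
      exact ⟨v, hv, hle, hgt _ hpos v hv hle⟩
    choose v hv1 hv2 hv3 using hv
    obtain ⟨x, φ, hx, hφ, hQt, hPt⟩ := extract v hv1
    have hFx : Q x + τ0 * P x ≤ 0 := by
      have htend : Tendsto (fun k => Q (v (φ k)) + (τ0 + 1 / (φ k + 1)) * P (v (φ k)))
          atTop (𝓝 (Q x + τ0 * P x)) :=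
        hQt.add (((hτplus.comp hφ.tendsto_atTop).mul hPt))
      exact le_of_tendsto htend (Eventually.of_forall fun k => hv2 (φ k))
    have hPx0 : P x ≤ 0 := le_of_tendsto hPt (Eventually.of_forall fun k =>
      le_of_lt (hv3 (φ k)))
    have hPxne : P x ≠ 0 := hne τ0 x hx hFx
    exact ⟨x, hx, hFx, lt_of_le_of_ne hPx0 hPxne⟩
  -- positive-sign point in K τ0
  have hpos : ∃ x : Fin n → ℝ, ‖x‖ = 1 ∧ Q x + τ0 * P x ≤ 0 ∧ 0 < P x := by
    have hv : ∀ k : ℕ, ∃ v : Fin n → ℝ, ‖v‖ = 1 ∧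
        Q v + (τ0 - 1 / (k + 1)) * P v ≤ 0 ∧ 0 < P v := by
      intro k
      obtain ⟨v, hv, hle⟩ := key (τ0 - 1 / (k + 1))
      have hlt' : τ0 - 1 / (k + 1) < τ0 := by
        have : (0:ℝ) < 1 / ((k:ℝ) + 1) := by positivity
        linarith
      exact ⟨v, hv, hle, dich _ (hlt _ hlt') v hv hle⟩
    choose v hv1 hv2 hv3 using hv
    obtain ⟨x, φ, hx, hφ, hQt, hPt⟩ := extract v hv1
    have hFx : Q x + τ0 * P x ≤ 0 := by
      have htend : Tendsto (fun k => Q (v (φ k)) + (τ0 - 1 / (φ k + 1)) * P (v (φ k)))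
          atTop (𝓝 (Q x + τ0 * P x)) :=
        hQt.add (((hτminus.comp hφ.tendsto_atTop).mul hPt))
      exact le_of_tendsto htend (Eventually.of_forall fun k => hv2 (φ k))
    have hPx0 : 0 ≤ P x := ge_of_tendsto hPt (Eventually.of_forall fun k =>
      le_of_lt (hv3 (φ k)))
    have hPxne : P x ≠ 0 := hne τ0 x hx hFx
    exact ⟨x, hx, hFx, lt_of_le_of_ne hPx0 (Ne.symm hPxne)⟩
  obtain ⟨xn, hxn, hFn, hPn⟩ := hneg
  obtain ⟨xp, hxp, hFp, hPp⟩ := hpos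
  exact mixed τ0 xp xn hxp hxn hFp hFn hPp hPn

/-- positivity of `Q` from an explicit wedge decomposition -/
private lemma decomp_step (r : Fin 4 → Fin 4 → Fin 4 → Fin 4 → ℝ)
    (hr1 : ∀ i j k l, r i j k l = -r j i k l)
    (hr2 : ∀ i j k l, r i j k l = -r i j l k)
    (hsec : ∀ x y : Fin 4 → ℝ, LinearIndependent ℝ ![x, y] →
        0 < ∑ i, ∑ j, ∑ k, ∑ l, r i j k l * x i * y j * y k * x l)
    (ω : Fin 4 → Fin 4 → ℝ) (a : ℝ) (ha : a ≠ 0) (x y : Fin 4 → ℝ)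
    (p q : Fin 4) (hpq : ω p q = a)
    (hxy : ∀ i j, x i * y j - x j * y i = a * ω i j) :
    0 < (1 / 4) * ∑ i, ∑ j, ∑ k, ∑ l, r i j k l * ω i j * ω l k := by
  have haa : x p * y q - x q * y p = a * a := by rw [hxy p q, hpq]
  have hli : LinearIndependent ℝ ![x, y] := by
    rw [linearIndependent_fin2]
    simp only [Matrix.cons_val_one, Matrix.head_cons, Matrix.cons_val_zero]
    constructor
    · intro h
      rw [h] at haa
      simp only [Pi.zero_apply, mul_zero, sub_zero, zero_sub, mul_zero] at haa
      exact ha (mul_self_eq_zero.mp (by linarith))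
    · intro c hc
      rw [← hc] at haa
      simp only [Pi.smul_apply, smul_eq_mul] at haa
      have h0 : a * a = 0 := by linear_combination -haa
      exact ha (mul_self_eq_zero.mp h0)
  have hR := hsec x y hli
  have h1 : (∑ i, ∑ j, ∑ k, ∑ l,
        r i j k l * (x i * y j - x j * y i) * (x l * y k - x k * y l))
      = a ^ 2 * ∑ i, ∑ j, ∑ k, ∑ l, r i j k l * ω i j * ω l k := by
    simp only [Finset.mul_sum]
    refine Finset.sum_congr rfl fun i _ => Finset.sum_congr rfl fun j _ =>
      Finset.sum_congr rfl fun k _ => Finset.sum_congr rfl fun l _ => ?_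
    rw [hxy i j, hxy l k]
    ring
  rw [wedge_sum r hr1 hr2 x y] at h1
  have ha2 : 0 < a ^ 2 := by positivity
  nlinarith

end FinslerThorpeAux

theorem finsler_thorpe_trick_pos
    (r : Fin 4 → Fin 4 → Fin 4 → Fin 4 → ℝ)
    (hr1 : ∀ i j k l, r i j k l = -r j i k l)
    (hr2 : ∀ i j k l, r i j k l = -r i j l k)
    (hr3 : ∀ i j k l, r i j k l = r k l i j)
    (hrb : ∀ i j k l, r i j k l + r j k i l + r k i j l = 0) :
    (∀ x y : Fin 4 → ℝ, LinearIndependent ℝ ![x, y] →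
        0 < ∑ i, ∑ j, ∑ k, ∑ l, r i j k l * x i * y j * y k * x l) ↔
      ∃ τ : ℝ, ∀ ω : Fin 4 → Fin 4 → ℝ, (∀ i j, ω i j = -ω j i) → ω ≠ 0 →
        0 < (1 / 4) * (∑ i, ∑ j, ∑ k, ∑ l, r i j k l * ω i j * ω l k) +
              τ * (ω 0 1 * ω 2 3 - ω 0 2 * ω 1 3 + ω 0 3 * ω 1 2) := by
  constructor
  · -- hard direction: sec > 0 implies existence of τ
    intro hsec
    set QQ : (Fin 6 → ℝ) → ℝ := fun v =>
      (1 / 4) * ∑ i, ∑ j, ∑ k, ∑ l, r i j k l * Wv v i j * Wv v l k with hQQ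
    set PP : (Fin 6 → ℝ) → ℝ := fun v =>
      v 0 * v 5 - v 1 * v 4 + v 2 * v 3 with hPP
    set BQ : (Fin 6 → ℝ) → (Fin 6 → ℝ) → ℝ := fun u w =>
      (1 / 4) * ∑ i, ∑ j, ∑ k, ∑ l,
        r i j k l * (Wv u i j * Wv w l k + Wv w i j * Wv u l k) with hBQ
    set BP : (Fin 6 → ℝ) → (Fin 6 → ℝ) → ℝ := fun u w =>
      u 0 * w 5 + w 0 * u 5 - u 1 * w 4 - w 1 * u 4 + u 2 * w 3 + w 2 * u 3 with hBP
    have hQc : Continuous QQ := by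
      rw [hQQ]
      apply Continuous.mul continuous_const
      refine continuous_finset_sum _ fun i _ => continuous_finset_sum _ fun j _ =>
        continuous_finset_sum _ fun k _ => continuous_finset_sum _ fun l _ => ?_
      exact (continuous_const.mul (Wv_cont i j)).mul (Wv_cont l k)
    have hPc : Continuous PP := by
      rw [hPP]
      fun_prop
    have hQpolar : ∀ (c s : ℝ) (u w : Fin 6 → ℝ),
        QQ (c • u + s • w) = c ^ 2 * QQ u + s ^ 2 * QQ w + (c * s) * BQ u w := by
      intro c s u w
      simp only [hQQ, hBQ]
      have hsum : (∑ i, ∑ j, ∑ k, ∑ l,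
            r i j k l * Wv (c • u + s • w) i j * Wv (c • u + s • w) l k)
          = c ^ 2 * (∑ i, ∑ j, ∑ k, ∑ l, r i j k l * Wv u i j * Wv u l k)
            + s ^ 2 * (∑ i, ∑ j, ∑ k, ∑ l, r i j k l * Wv w i j * Wv w l k)
            + (c * s) * (∑ i, ∑ j, ∑ k, ∑ l,
                r i j k l * (Wv u i j * Wv w l k + Wv w i j * Wv u l k)) := by
        simp only [Finset.mul_sum, ← Finset.sum_add_distrib]
        refine Finset.sum_congr rfl fun i _ => Finset.sum_congr rfl fun j _ =>
          Finset.sum_congr rfl fun k _ => Finset.sum_congr rfl fun l _ => ?_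
        rw [Wv_lin c s u w i j, Wv_lin c s u w l k]
        ring
      rw [hsum]
      ring
    have hPpolar : ∀ (c s : ℝ) (u w : Fin 6 → ℝ),
        PP (c • u + s • w) = c ^ 2 * PP u + s ^ 2 * PP w + (c * s) * BP u w := by
      intro c s u w
      simp only [hPP, hBP, Pi.add_apply, Pi.smul_apply, smul_eq_mul]
      ring
    have pos : ∀ v : Fin 6 → ℝ, v ≠ 0 → PP v = 0 → 0 < QQ v := by
      intro v hv hPv
      simp only [hPP] at hPv
      obtain ⟨p, hp⟩ := Function.ne_iff.mp hv
      rw [hQQ]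
      simp only []
      fin_cases p
      · refine decomp_step r hr1 hr2 hsec (Wv v) (v 0) hp
          ![0, -v 0, -v 1, -v 2] ![v 0, 0, -v 3, -v 4] 0 1 (by simp [Wv, wmat]) ?_
        intro i j
        fin_cases i <;> fin_cases j <;> simp [Wv, wmat]
        any_goals linear_combination -hPv
        any_goals linear_combination hPv
        all_goals ring
      · refine decomp_step r hr1 hr2 hsec (Wv v) (v 1) hp
          ![0, -v 0, -v 1, -v 2] ![v 1, v 3, 0, -v 5] 0 2 (by simp [Wv, wmat]) ?_
        intro i j
        fin_cases i <;> fin_cases j <;> simp [Wv, wmat]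
        any_goals linear_combination -hPv
        any_goals linear_combination hPv
        all_goals ring
      · refine decomp_step r hr1 hr2 hsec (Wv v) (v 2) hp
          ![0, -v 0, -v 1, -v 2] ![v 2, v 4, v 5, 0] 0 3 (by simp [Wv, wmat]) ?_
        intro i j
        fin_cases i <;> fin_cases j <;> simp [Wv, wmat]
        any_goals linear_combination -hPv
        any_goals linear_combination hPv
        all_goals ring
      · refine decomp_step r hr1 hr2 hsec (Wv v) (v 3) hp
          ![v 0, 0, -v 3, -v 4] ![v 1, v 3, 0, -v 5] 1 2 (by simp [Wv, wmat]) ?_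
        intro i j
        fin_cases i <;> fin_cases j <;> simp [Wv, wmat]
        any_goals linear_combination -hPv
        any_goals linear_combination hPv
        all_goals ring
      · refine decomp_step r hr1 hr2 hsec (Wv v) (v 4) hp
          ![v 0, 0, -v 3, -v 4] ![v 2, v 4, v 5, 0] 1 3 (by simp [Wv, wmat]) ?_
        intro i j
        fin_cases i <;> fin_cases j <;> simp [Wv, wmat]
        any_goals linear_combination -hPv
        any_goals linear_combination hPv
        all_goals ring
      · refine decomp_step r hr1 hr2 hsec (Wv v) (v 5) hp
          ![v 1, v 3, 0, -v 5] ![v 2, v 4, v 5, 0] 2 3 (by simp [Wv, wmat]) ?_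
        intro i j
        fin_cases i <;> fin_cases j <;> simp [Wv, wmat]
        any_goals linear_combination -hPv
        any_goals linear_combination hPv
        all_goals ring
    obtain ⟨τ, hτ⟩ := finsler_abstract QQ PP BQ BP hQc hPc hQpolar hPpolar pos
    refine ⟨τ, fun ω hanti hωne => ?_⟩
    set v : Fin 6 → ℝ := ![ω 0 1, ω 0 2, ω 0 3, ω 1 2, ω 1 3, ω 2 3] with hv
    have hmatch : ∀ i j, Wv v i j = ω i j := by
      intro i j
      have h00 : ω 0 0 = 0 := by linarith [hanti 0 0]
      have h11 : ω 1 1 = 0 := by linarith [hanti 1 1]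
      have h22 : ω 2 2 = 0 := by linarith [hanti 2 2]
      have h33 : ω 3 3 = 0 := by linarith [hanti 3 3]
      fin_cases i <;> fin_cases j <;>
        simp [Wv, wmat, hv, hanti 1 0, hanti 2 0, hanti 3 0, hanti 2 1,
          hanti 3 1, hanti 3 2, h00, h11, h22, h33]
      all_goals rfl
    have hv0 : v ≠ 0 := by
      intro h
      apply hωne
      funext i j
      rw [← hmatch i j, h]
      exact Wv_zero i j
    have hkey := hτ v hv0
    have hQv : QQ v = (1 / 4) * ∑ i, ∑ j, ∑ k, ∑ l, r i j k l * ω i j * ω l k := by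
      rw [hQQ]
      simp only []
      congr 1
      refine Finset.sum_congr rfl fun i _ => Finset.sum_congr rfl fun j _ =>
        Finset.sum_congr rfl fun k _ => Finset.sum_congr rfl fun l _ => ?_
      rw [hmatch i j, hmatch l k]
    have hPv : PP v = ω 0 1 * ω 2 3 - ω 0 2 * ω 1 3 + ω 0 3 * ω 1 2 := by
      rw [hPP]
      rfl
    rw [hQv, hPv] at hkey
    exact hkey
  · -- easy direction: plug in decomposable 2-vectors
    rintro ⟨τ, hτ⟩ x y hli
    set ω : Fin 4 → Fin 4 → ℝ := fun i j => x i * y j - x j * y i with hω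
    have hanti : ∀ i j, ω i j = -ω j i := by
      intro i j; simp only [hω]; ring
    have hne : ω ≠ 0 := by
      rw [linearIndependent_fin2] at hli
      simp only [Matrix.cons_val_one, Matrix.head_cons, Matrix.cons_val_zero] at hli
      obtain ⟨hy, hnx⟩ := hli
      intro h0
      obtain ⟨q, hq⟩ := Function.ne_iff.mp hy
      have hq' : y q ≠ 0 := by simpa using hq
      apply hnx (x q / y q)
      funext i
      have hiq : x i * y q - x q * y i = 0 := by
        have := congrFun (congrFun h0 i) q
        simpa [hω] using this
      simp only [Pi.smul_apply, smul_eq_mul]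
      field_simp
      linear_combination -hiq
    have hkey := hτ ω hanti hne
    have hP0 : ω 0 1 * ω 2 3 - ω 0 2 * ω 1 3 + ω 0 3 * ω 1 2 = 0 := by
      simp only [hω]; ring
    have hsum : (∑ i, ∑ j, ∑ k, ∑ l, r i j k l * ω i j * ω l k)
        = 4 * ∑ i, ∑ j, ∑ k, ∑ l, r i j k l * x i * y j * y k * x l := by
      have he : (∑ i, ∑ j, ∑ k, ∑ l, r i j k l * ω i j * ω l k)
          = ∑ i, ∑ j, ∑ k, ∑ l,
              r i j k l * (x i * y j - x j * y i) * (x l * y k - x k * y l) := by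
        simp only [hω]
      rw [he, wedge_sum r hr1 hr2]
    rw [hsum, hP0] at hkey
    linarith
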